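/- Let U ⊆ ℝ³ be open, ν : U → ℝ twice continuously differentiable with |∇ν(x)| = 1 for all x ∈ U, k a natural number, z ∈ ℂ with z ≠ 0, g : U → ℂ continuously differentiable, and f_τ : U → ℂ³ continuously differentiable with f_τ·∇ν = 0 on U. Define u = z^{−1}·e^{−zν}·( P₁(zν)·g·∇ν + P₂(zν)·f_τ ). Then on U one has ∇·u = e^{−zν}·[ (zν)^k · g + z^{−1}·( P₁(zν)·∇·(g∇ν) + P₂(zν)·∇·f_τ ) ]. -/

import Mathlib

open Polynomial InnerProductSpace

/-- Componentwise complexification of a real vector in `ℝ³`. -/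
noncomputable def cV (v : EuclideanSpace ℝ (Fin 3)) : EuclideanSpace ℂ (Fin 3) :=
  WithLp.toLp 2 (fun i => (v i : ℂ))

/-- Divergence of a complex vector field on `ℝ³`. -/
noncomputable def divC (f : EuclideanSpace ℝ (Fin 3) → EuclideanSpace ℂ (Fin 3))
    (x : EuclideanSpace ℝ (Fin 3)) : ℂ :=
  ∑ i : Fin 3, fderiv ℝ f x (EuclideanSpace.single i 1) i

/-- The polynomial `P₁(X) = -k! · ∑_{j=0}^{k} X^j / j!` (over `ℂ`). -/
noncomputable def P₁ (k : ℕ) : Polynomial ℂ :=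
  -(C (k.factorial : ℂ)) * ∑ j ∈ Finset.range (k + 1), C ((j.factorial : ℂ)⁻¹) * X ^ j

/-- The polynomial `P₂(X) = 2^{-k-2} · k! · ∑_{j=1}^{k+1} (2X)^j / j!` (over `ℂ`). -/
noncomputable def P₂ (k : ℕ) : Polynomial ℂ :=
  C (((2 : ℂ) ^ (k + 2))⁻¹ * (k.factorial : ℂ)) *
    ∑ j ∈ Finset.Icc 1 (k + 1), C ((j.factorial : ℂ)⁻¹) * (C 2 * X) ^ j


open InnerProductSpace in
/-- `cV` as a continuous `ℝ`-linear map. -/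
noncomputable def cVL : EuclideanSpace ℝ (Fin 3) →L[ℝ] EuclideanSpace ℂ (Fin 3) :=
  LinearMap.toContinuousLinearMap
    { toFun := cV
      map_add' := by intro a b; ext i; simp [cV]
      map_smul' := by intro c a; ext i; simp [cV, Complex.real_smul] }

lemma sum_aux (k : ℕ) (w : ℂ) :
    ∑ j ∈ Finset.range (k+1), (j.factorial:ℂ)⁻¹ * ((j:ℂ) * w^(j-1)) =
    ∑ j ∈ Finset.range k, (j.factorial:ℂ)⁻¹ * w^j := by
  induction k with
  | zero => simp
  | succ n ih =>
    rw [Finset.sum_range_succ, ih, Finset.sum_range_succ]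
    congr 1
    have h1 : ((n.factorial : ℂ)) ≠ 0 := by exact_mod_cast n.factorial_ne_zero
    have h2 : ((n:ℂ) + 1) ≠ 0 := Nat.cast_add_one_ne_zero n
    rw [Nat.factorial_succ]
    push_cast
    field_simp

lemma P1_deriv (k : ℕ) (w : ℂ) :
    (P₁ k).derivative.eval w = (P₁ k).eval w + w ^ k := by
  have hk : ((k.factorial : ℂ)) ≠ 0 := by exact_mod_cast k.factorial_ne_zero
  simp only [P₁, derivative_mul, derivative_neg, derivative_C, neg_zero, zero_mul, zero_add,
    derivative_sum, derivative_C_mul, derivative_X_pow, eval_mul, eval_neg, eval_C,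
    eval_finset_sum, eval_pow, eval_X, eval_natCast]
  rw [sum_aux, Finset.sum_range_succ]
  field_simp
  ring

/-- let `ν` be `C²` on the open `U` with `|∇ν| = 1`, `k ∈ ℕ`, `z ≠ 0`,
`g : U → ℂ` of class `C¹`, `f_τ : U → ℂ³` of class `C¹` with `f_τ·∇ν = 0` on `U`, and
`u = z^{−1}·e^{−zν}·(P₁(zν)·g·∇ν + P₂(zν)·f_τ)`. Then on `U`:
`∇·u = e^{−zν}·[(zν)^k·g + z^{−1}·(P₁(zν)·∇·(g∇ν) + P₂(zν)·∇·f_τ)]`. -/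
theorem statement10
    (U : Set (EuclideanSpace ℝ (Fin 3))) (hU : IsOpen U)
    (ν : EuclideanSpace ℝ (Fin 3) → ℝ)
    (hν : ContDiffOn ℝ 2 ν U)
    (hgrad : ∀ x ∈ U, ‖gradient ν x‖ = 1)
    (k : ℕ) (z : ℂ) (hz : z ≠ 0)
    (g : EuclideanSpace ℝ (Fin 3) → ℂ) (hg : ContDiffOn ℝ 1 g U)
    (fτ : EuclideanSpace ℝ (Fin 3) → EuclideanSpace ℂ (Fin 3))
    (hfτ : ContDiffOn ℝ 1 fτ U)
    (hfτν : ∀ x ∈ U, ∑ i : Fin 3, fτ x i * ((gradient ν x i : ℝ) : ℂ) = 0)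
    (u : EuclideanSpace ℝ (Fin 3) → EuclideanSpace ℂ (Fin 3))
    (hu : ∀ y, u y = (z⁻¹ * Complex.exp (-z * (ν y : ℂ))) •
        (((P₁ k).eval (z * (ν y : ℂ)) * g y) • cV (gradient ν y)
          + (P₂ k).eval (z * (ν y : ℂ)) • fτ y))
    (x : EuclideanSpace ℝ (Fin 3)) (hx : x ∈ U) :
    divC u x
      = Complex.exp (-z * (ν x : ℂ)) *
          ((z * (ν x : ℂ)) ^ k * g x
            + z⁻¹ * ((P₁ k).eval (z * (ν x : ℂ))
                  * divC (fun y => g y • cV (gradient ν y)) x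
                + (P₂ k).eval (z * (ν x : ℂ)) * divC fτ x)) := by
  classical
  have hxU : U ∈ nhds x := hU.mem_nhds hx
  have hνd : DifferentiableAt ℝ ν x := (hν.contDiffAt hxU).differentiableAt (by norm_num)
  have hν' : HasFDerivAt ν (fderiv ℝ ν x) x := hνd.hasFDerivAt
  have hνC : HasFDerivAt (fun y => ((ν y : ℝ) : ℂ))
      (Complex.ofRealCLM.comp (fderiv ℝ ν x)) x :=
    Complex.ofRealCLM.hasFDerivAt.comp x hν'
  have hzν : HasFDerivAt (fun y => z * (ν y : ℂ))
      (z • Complex.ofRealCLM.comp (fderiv ℝ ν x)) x := hνC.const_mul z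
  have hmzν : HasFDerivAt (fun y => -z * (ν y : ℂ))
      ((-z) • Complex.ofRealCLM.comp (fderiv ℝ ν x)) x := hνC.const_mul (-z)
  have hexp : HasFDerivAt (fun y => Complex.exp (-z * (ν y : ℂ)))
      (Complex.exp (-z * (ν x : ℂ)) • ((-z) • Complex.ofRealCLM.comp (fderiv ℝ ν x))) x :=
    (Complex.hasDerivAt_exp _).comp_hasFDerivAt x hmzν
  have ha : HasFDerivAt (fun y => z⁻¹ * Complex.exp (-z * (ν y : ℂ)))
      (z⁻¹ • (Complex.exp (-z * (ν x : ℂ)) •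
        ((-z) • Complex.ofRealCLM.comp (fderiv ℝ ν x)))) x := hexp.const_mul z⁻¹
  have hp1 : HasFDerivAt (fun y => (P₁ k).eval (z * (ν y : ℂ)))
      ((P₁ k).derivative.eval (z * (ν x : ℂ)) •
        (z • Complex.ofRealCLM.comp (fderiv ℝ ν x))) x :=
    ((P₁ k).hasDerivAt _).comp_hasFDerivAt x hzν
  have hp2 : HasFDerivAt (fun y => (P₂ k).eval (z * (ν y : ℂ)))
      ((P₂ k).derivative.eval (z * (ν x : ℂ)) •
        (z • Complex.ofRealCLM.comp (fderiv ℝ ν x))) x :=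
    ((P₂ k).hasDerivAt _).comp_hasFDerivAt x hzν
  have hgd : HasFDerivAt g (fderiv ℝ g x) x :=
    (((hg.contDiffAt hxU).differentiableAt one_ne_zero)).hasFDerivAt
  have hfd : HasFDerivAt fτ (fderiv ℝ fτ x) x :=
    (((hfτ.contDiffAt hxU).differentiableAt one_ne_zero)).hasFDerivAt
  have hgraddiff : DifferentiableAt ℝ (fun y => gradient ν y) x := by
    have h1 : ContDiffAt ℝ 1 (fun y => fderiv ℝ ν y) x :=
      (hν.contDiffAt hxU).fderiv_right (by norm_num)
    exact ((toDual ℝ (EuclideanSpace ℝ (Fin 3))).symm.toContinuousLinearEquiv.differentiableAt).comp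
      x (h1.differentiableAt one_ne_zero)
  have hGdiff : DifferentiableAt ℝ (fun y => cVL (gradient ν y)) x :=
    cVL.differentiableAt.comp x hgraddiff
  have hG : HasFDerivAt (fun y => cVL (gradient ν y))
      (fderiv ℝ (fun y => cVL (gradient ν y)) x) x := hGdiff.hasFDerivAt
  -- the big derivative
  have hu' := ha.smul (((hp1.mul hgd).smul hG).add (hp2.smul hfd))
  have hufun : u = fun y => (z⁻¹ * Complex.exp (-z * (ν y : ℂ))) •
      (((P₁ k).eval (z * (ν y : ℂ)) * g y) • (fun y => cVL (gradient ν y)) y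
        + (P₂ k).eval (z * (ν y : ℂ)) • fτ y) := by
    funext y; rw [hu y]; rfl
  replace hu' := hu'.congr_of_eventuallyEq (f₁ := u)
    (Filter.Eventually.of_forall fun y => by rw [hufun]; rfl)
  simp only [Pi.mul_apply, Pi.smul_apply, Pi.smul_apply', Pi.add_apply] at hu'
  have hfd_u := hu'.fderiv
  unfold divC
  rw [hfd_u]
  -- gradient component facts
  have hδ : ∀ i : Fin 3, (fderiv ℝ ν x) (EuclideanSpace.single i 1) = gradient ν x i := by
    intro i
    have h1 : toDual ℝ (EuclideanSpace ℝ (Fin 3)) (gradient ν x) = fderiv ℝ ν x :=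
      (toDual ℝ (EuclideanSpace ℝ (Fin 3))).apply_symm_apply (fderiv ℝ ν x)
    rw [← h1, toDual_apply_apply]
    rw [EuclideanSpace.inner_single_right]; simp
  have hcvl : ∀ i : Fin 3, cVL (gradient ν x) i = ((gradient ν x i : ℝ) : ℂ) := fun i => rfl
  have hgG : HasFDerivAt (fun y => g y • cV (gradient ν y))
      (g x • fderiv ℝ (fun y => cVL (gradient ν y)) x
        + (fderiv ℝ g x).smulRight (cVL (gradient ν x))) x := hgd.smul hG
  have hdiv1 : ∀ i : Fin 3,
      (fderiv ℝ (fun y => g y • cV (gradient ν y)) x) (EuclideanSpace.single i 1) i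
        = g x * (fderiv ℝ (fun y => cVL (gradient ν y)) x) (EuclideanSpace.single i 1) i
          + (fderiv ℝ g x) (EuclideanSpace.single i 1) * ((gradient ν x i : ℝ) : ℂ) := by
    intro i
    rw [hgG.fderiv]
    simp [hcvl, ContinuousLinearMap.add_apply, ContinuousLinearMap.smul_apply,
      ContinuousLinearMap.smulRight_apply, PiLp.add_apply, PiLp.smul_apply, smul_eq_mul]
  have hr : ∑ i : Fin 3, gradient ν x i * gradient ν x i = 1 := by
    have h1 := real_inner_self_eq_norm_sq (gradient ν x)
    rw [hgrad x hx] at h1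
    simp only [PiLp.inner_apply, RCLike.inner_apply] at h1
    simpa [PiLp.inner_apply, RCLike.inner_apply] using h1
  have hS1 : ∑ i : Fin 3, ((gradient ν x i : ℝ) : ℂ) * ((gradient ν x i : ℝ) : ℂ) = 1 := by
    exact_mod_cast hr
  have hS2 := hfτν x hx
  simp only [ContinuousLinearMap.add_apply, ContinuousLinearMap.smul_apply,
    ContinuousLinearMap.smulRight_apply, ContinuousLinearMap.comp_apply,
    Complex.ofRealCLM_apply, PiLp.add_apply, PiLp.smul_apply, smul_eq_mul,
    hδ, hcvl, hdiv1]
  trans (∑ i : Fin 3,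
      ((z⁻¹ * Complex.exp (-z * (ν x : ℂ)) * z *
          (Polynomial.eval (z * (ν x : ℂ)) (Polynomial.derivative (P₁ k))
            - Polynomial.eval (z * (ν x : ℂ)) (P₁ k)) * g x) *
          (((gradient ν x i : ℝ) : ℂ) * ((gradient ν x i : ℝ) : ℂ))
        + (z⁻¹ * Complex.exp (-z * (ν x : ℂ)) * z *
            (Polynomial.eval (z * (ν x : ℂ)) (Polynomial.derivative (P₂ k))
              - Polynomial.eval (z * (ν x : ℂ)) (P₂ k))) *
            (fτ x i * ((gradient ν x i : ℝ) : ℂ))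
        + (z⁻¹ * Complex.exp (-z * (ν x : ℂ)) * Polynomial.eval (z * (ν x : ℂ)) (P₁ k)) *
            (g x * (fderiv ℝ (fun y => cVL (gradient ν y)) x) (EuclideanSpace.single i 1) i
              + (fderiv ℝ g x) (EuclideanSpace.single i 1) * ((gradient ν x i : ℝ) : ℂ))
        + (z⁻¹ * Complex.exp (-z * (ν x : ℂ)) * Polynomial.eval (z * (ν x : ℂ)) (P₂ k)) *
            (fderiv ℝ fτ x) (EuclideanSpace.single i 1) i))
  · exact Finset.sum_congr rfl fun i _ => by ring
  · rw [Finset.sum_add_distrib, Finset.sum_add_distrib, Finset.sum_add_distrib,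
      ← Finset.mul_sum, ← Finset.mul_sum, ← Finset.mul_sum, ← Finset.mul_sum,
      hS1, hS2, P1_deriv]
    field_simp
    ring
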